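/- Fix integers n ≥ 1 and 0 < v_1 < v_2 < ⋯ < v_n < v_{n+1} = N. Let d be a degree vector that is aligned and not identically zero. Then for every 1 ≤ i ≤ n, D(d) < − Σ_{j=1}^{v_i} d^i_j. -/
import Mathlib


open Finset

/-- `Bb m = m(m+1)/2` for `m ≥ 0` and `Bb m = 0` for `m < 0`. -/
def Bb (m : ℤ) : ℤ := if 0 ≤ m then m * (m + 1) / 2 else 0

/-- The degree `D(d)` of the coefficient `J_d` of the twisted small `J`-function of
the abelianization of `Fl(v_1,…,v_n; N)`. -/
def degD (n : ℕ) (v : ℕ → ℕ) (d : ℕ → ℕ → ℕ) : ℤ :=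
  ∑ i ∈ Icc 1 n,
    ((∑ j ∈ Icc 1 (v i), ∑ k ∈ Icc 1 (v i), Bb ((d i j : ℤ) - (d i k : ℤ)))
      - ∑ j ∈ Icc 1 (v i), ∑ r ∈ Icc 1 (v (i + 1)),
          Bb ((d i j : ℤ) - (d (i + 1) r : ℤ)))

/-- A degree vector `d` is aligned if for every `1 ≤ i ≤ n` there is an injection
`f_i : {1,…,v_i} → {1,…,v_{i+1}}` with `d^i_j ≥ d^{i+1}_{f_i(j)}` for all `j`. -/
def Aligned (n : ℕ) (v : ℕ → ℕ) (d : ℕ → ℕ → ℕ) : Prop :=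
  ∀ i, 1 ≤ i → i ≤ n → ∃ f : ℕ → ℕ,
    Set.InjOn f (Set.Icc 1 (v i)) ∧
    ∀ j, 1 ≤ j → j ≤ v i → 1 ≤ f j ∧ f j ≤ v (i + 1) ∧ d (i + 1) (f j) ≤ d i j


lemma Bb_nonneg (m : ℤ) : 0 ≤ Bb m := by
  unfold Bb; split
  · positivity
  · exact le_refl 0

lemma le_Bb (m : ℤ) : m ≤ Bb m := by
  unfold Bb; split
  · rename_i h
    have h2 : 2 * m ≤ m * (m + 1) := by
      rcases eq_or_lt_of_le h with h0 | h0
      · nlinarith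
      · nlinarith
    omega
  · omega

lemma Bb_mono {a b : ℤ} (h : a ≤ b) : Bb a ≤ Bb b := by
  unfold Bb; split
  · rename_i ha
    have hb : 0 ≤ b := le_trans ha h
    rw [if_pos hb]
    apply Int.ediv_le_ediv (by norm_num)
    nlinarith
  · split
    · rename_i ha hb; positivity
    · exact le_refl 0

lemma Bb_zero : Bb 0 = 0 := by unfold Bb; norm_num

lemma degD_tele (U : ℕ → ℤ) :
    ∀ n i : ℕ, i ≤ n → ∑ ℓ ∈ Icc i n, (U (ℓ+1) - U ℓ) = U (n+1) - U i := by
  intro n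
  induction n with
  | zero => intro i h; interval_cases i; simp
  | succ n ih =>
    intro i h
    rcases Nat.lt_or_ge i (n+1) with h' | h'
    · rw [Finset.sum_Icc_succ_top (by omega), ih i (by omega)]; ring
    · have : i = n + 1 := by omega
      subst this; simp

lemma layer_le (v : ℕ → ℕ) (d : ℕ → ℕ → ℕ) (ℓ : ℕ) (hlt : v ℓ < v (ℓ+1))
    (f : ℕ → ℕ) (hinj : Set.InjOn f (Set.Icc 1 (v ℓ)))
    (hf : ∀ j, 1 ≤ j → j ≤ v ℓ → 1 ≤ f j ∧ f j ≤ v (ℓ+1) ∧ d (ℓ+1) (f j) ≤ d ℓ j) :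
    ∃ r0 ∈ Icc 1 (v (ℓ+1)),
      (∑ j ∈ Icc 1 (v ℓ), ∑ k ∈ Icc 1 (v ℓ), Bb ((d ℓ j : ℤ) - (d ℓ k : ℤ)))
        - ∑ j ∈ Icc 1 (v ℓ), ∑ r ∈ Icc 1 (v (ℓ+1)), Bb ((d ℓ j : ℤ) - (d (ℓ+1) r : ℤ))
      ≤ ∑ j ∈ Icc 1 (v ℓ),
          (-(Bb ((d ℓ j : ℤ) - (d (ℓ+1) (f j) : ℤ))) - Bb ((d ℓ j : ℤ) - (d (ℓ+1) r0 : ℤ))) := by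
  have hinjA : ∀ x ∈ Icc 1 (v ℓ), ∀ y ∈ Icc 1 (v ℓ), f x = f y → x = y := by
    intro x hx y hy hxy
    rw [mem_Icc] at hx hy
    exact hinj (Set.mem_Icc.2 hx) (Set.mem_Icc.2 hy) hxy
  have himage : (Icc 1 (v ℓ)).image f ⊆ Icc 1 (v (ℓ+1)) := by
    intro r hr
    obtain ⟨j, hj, rfl⟩ := mem_image.1 hr
    rw [mem_Icc] at hj ⊢
    exact ⟨(hf j hj.1 hj.2).1, (hf j hj.1 hj.2).2.1⟩
  have hcard : ((Icc 1 (v ℓ)).image f).card = v ℓ := by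
    rw [Finset.card_image_of_injOn (by rwa [coe_Icc])]
    simp
  have hex : ∃ r0 ∈ Icc 1 (v (ℓ+1)), r0 ∉ (Icc 1 (v ℓ)).image f := by
    by_contra hcon
    push_neg at hcon
    have := Finset.card_le_card hcon
    rw [hcard] at this
    simp at this
    omega
  obtain ⟨r0, hr0B, hr0n⟩ := hex
  refine ⟨r0, hr0B, ?_⟩
  rw [← Finset.sum_sub_distrib]
  apply Finset.sum_le_sum
  intro j hj
  set g : ℕ → ℤ := fun r => Bb ((d ℓ j : ℤ) - (d (ℓ+1) r : ℤ)) with hg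
  have h1 : ∑ k ∈ Icc 1 (v ℓ), Bb ((d ℓ j : ℤ) - (d ℓ k : ℤ))
      ≤ (∑ r ∈ (Icc 1 (v ℓ)).image f, g r) - g (f j) := by
    calc ∑ k ∈ Icc 1 (v ℓ), Bb ((d ℓ j : ℤ) - (d ℓ k : ℤ))
        = Bb ((d ℓ j : ℤ) - (d ℓ j : ℤ))
            + ∑ k ∈ (Icc 1 (v ℓ)).erase j, Bb ((d ℓ j : ℤ) - (d ℓ k : ℤ)) :=
          (Finset.add_sum_erase _ _ hj).symm
      _ = ∑ k ∈ (Icc 1 (v ℓ)).erase j, Bb ((d ℓ j : ℤ) - (d ℓ k : ℤ)) := by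
          rw [sub_self, Bb_zero, zero_add]
      _ ≤ ∑ k ∈ (Icc 1 (v ℓ)).erase j, g (f k) := by
          apply Finset.sum_le_sum
          intro k hk
          have hk' := Finset.mem_of_mem_erase hk
          rw [mem_Icc] at hk'
          apply Bb_mono
          have := (hf k hk'.1 hk'.2).2.2
          have : (d (ℓ+1) (f k) : ℤ) ≤ (d ℓ k : ℤ) := by exact_mod_cast this
          omega
      _ = (∑ k ∈ Icc 1 (v ℓ), g (f k)) - g (f j) := by
          rw [← Finset.add_sum_erase _ (fun k => g (f k)) hj]; ring
      _ = (∑ r ∈ (Icc 1 (v ℓ)).image f, g r) - g (f j) := by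
          rw [Finset.sum_image hinjA]
  have h2 : g r0 + ∑ r ∈ (Icc 1 (v ℓ)).image f, g r ≤ ∑ r ∈ Icc 1 (v (ℓ+1)), g r := by
    rw [← Finset.sum_insert hr0n]
    apply Finset.sum_le_sum_of_subset_of_nonneg
    · intro x hx
      rcases Finset.mem_insert.1 hx with rfl | hx
      · exact hr0B
      · exact himage hx
    · intros; exact Bb_nonneg _
  linarith


/-- First degree-bound lemma: for an aligned, not identically zero degree vector `d`,
for every `1 ≤ i ≤ n`, `D(d) < − Σ_{j=1}^{v_i} d^i_j`. -/
theorem degD_lt_neg_sum (n : ℕ) (hn : 1 ≤ n) (v : ℕ → ℕ) (d : ℕ → ℕ → ℕ)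
    (hv1 : 0 < v 1) (hvmono : ∀ i, 1 ≤ i → i ≤ n → v i < v (i + 1))
    (hdtop : ∀ r, d (n + 1) r = 0)
    (halign : Aligned n v d)
    (hne : ∃ i j, 1 ≤ i ∧ i ≤ n ∧ 1 ≤ j ∧ j ≤ v i ∧ d i j ≠ 0) :
    ∀ i, 1 ≤ i → i ≤ n → degD n v d < -(∑ j ∈ Icc 1 (v i), (d i j : ℤ)) := by
  set S : ℕ → ℤ := fun ℓ =>
    (∑ j ∈ Icc 1 (v ℓ), ∑ k ∈ Icc 1 (v ℓ), Bb ((d ℓ j : ℤ) - (d ℓ k : ℤ)))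
      - ∑ j ∈ Icc 1 (v ℓ), ∑ r ∈ Icc 1 (v (ℓ + 1)), Bb ((d ℓ j : ℤ) - (d (ℓ + 1) r : ℤ))
    with hSdef
  set U : ℕ → ℤ := fun ℓ => ∑ j ∈ Icc 1 (v ℓ), (d ℓ j : ℤ) with hUdef
  have hdeg : degD n v d = ∑ ℓ ∈ Icc 1 n, S ℓ := rfl
  have hUnonneg : ∀ ℓ, 0 ≤ U ℓ := fun ℓ => Finset.sum_nonneg fun j _ => Int.ofNat_nonneg _
  -- per-layer bound with a chosen extra column r0
  have layer : ∀ ℓ, 1 ≤ ℓ → ℓ ≤ n → ∃ r0, r0 ∈ Icc 1 (v (ℓ+1)) ∧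
      S ℓ ≤ -(∑ j ∈ Icc 1 (v ℓ), Bb ((d ℓ j : ℤ) - (d (ℓ+1) r0 : ℤ))) ∧
      S ℓ ≤ U (ℓ+1) - U ℓ - ∑ j ∈ Icc 1 (v ℓ), Bb ((d ℓ j : ℤ) - (d (ℓ+1) r0 : ℤ)) := by
    intro ℓ h1 h2
    obtain ⟨f, hinj, hfp⟩ := halign ℓ h1 h2
    obtain ⟨r0, hr0, hle⟩ := layer_le v d ℓ (hvmono ℓ h1 h2) f hinj hfp
    have hinjA : ∀ x ∈ Icc 1 (v ℓ), ∀ y ∈ Icc 1 (v ℓ), f x = f y → x = y := by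
      intro x hx y hy hxy
      rw [mem_Icc] at hx hy
      exact hinj (Set.mem_Icc.2 hx) (Set.mem_Icc.2 hy) hxy
    have himage : (Icc 1 (v ℓ)).image f ⊆ Icc 1 (v (ℓ+1)) := by
      intro r hr
      obtain ⟨j, hj, rfl⟩ := mem_image.1 hr
      rw [mem_Icc] at hj ⊢
      exact ⟨(hfp j hj.1 hj.2).1, (hfp j hj.1 hj.2).2.1⟩
    have hbsum : ∑ j ∈ Icc 1 (v ℓ), (d (ℓ+1) (f j) : ℤ) ≤ U (ℓ+1) := by
      have heq : ∑ r ∈ (Icc 1 (v ℓ)).image f, (d (ℓ+1) r : ℤ)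
          = ∑ j ∈ Icc 1 (v ℓ), (d (ℓ+1) (f j) : ℤ) :=
        Finset.sum_image (g := f) (f := fun r => (d (ℓ+1) r : ℤ)) hinjA
      rw [← heq]
      exact Finset.sum_le_sum_of_subset_of_nonneg himage fun _ _ _ => Int.ofNat_nonneg _
    refine ⟨r0, hr0, ?_, ?_⟩
    · refine hle.trans ?_
      rw [← Finset.sum_neg_distrib]
      apply Finset.sum_le_sum
      intro j hj
      have := Bb_nonneg ((d ℓ j : ℤ) - (d (ℓ+1) (f j) : ℤ))
      linarith
    · refine hle.trans ?_
      calc ∑ j ∈ Icc 1 (v ℓ),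
              (-(Bb ((d ℓ j : ℤ) - (d (ℓ+1) (f j) : ℤ))) - Bb ((d ℓ j : ℤ) - (d (ℓ+1) r0 : ℤ)))
          ≤ ∑ j ∈ Icc 1 (v ℓ),
              (((d (ℓ+1) (f j) : ℤ) - (d ℓ j : ℤ)) - Bb ((d ℓ j : ℤ) - (d (ℓ+1) r0 : ℤ))) := by
            apply Finset.sum_le_sum
            intro j hj
            have := le_Bb ((d ℓ j : ℤ) - (d (ℓ+1) (f j) : ℤ))
            linarith
        _ = (∑ j ∈ Icc 1 (v ℓ), (d (ℓ+1) (f j) : ℤ)) - U ℓ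
              - ∑ j ∈ Icc 1 (v ℓ), Bb ((d ℓ j : ℤ) - (d (ℓ+1) r0 : ℤ)) := by
            rw [Finset.sum_sub_distrib, Finset.sum_sub_distrib]
        _ ≤ U (ℓ+1) - U ℓ - ∑ j ∈ Icc 1 (v ℓ), Bb ((d ℓ j : ℤ) - (d (ℓ+1) r0 : ℤ)) := by
            linarith
  choose! r0 hlayer using layer
  set E : ℕ → ℤ := fun ℓ => ∑ j ∈ Icc 1 (v ℓ), Bb ((d ℓ j : ℤ) - (d (ℓ+1) (r0 ℓ) : ℤ)) with hEdef
  have hEnonneg : ∀ ℓ, 0 ≤ E ℓ := fun ℓ => Finset.sum_nonneg fun j _ => Bb_nonneg _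
  -- top nonzero layer
  obtain ⟨i1, j1, hi1a, hi1b, hj1a, hj1b, hd1⟩ := hne
  have instP : DecidablePred (fun ℓ : ℕ => ∃ j ∈ Icc 1 (v ℓ), d ℓ j ≠ 0) :=
    fun ℓ => inferInstance
  set T : Finset ℕ := @Finset.filter ℕ (fun ℓ => ∃ j ∈ Icc 1 (v ℓ), d ℓ j ≠ 0) instP (Icc 1 n)
    with hTdef
  have hTmem : ∀ ℓ : ℕ, ℓ ∈ T ↔ (ℓ ∈ Icc 1 n ∧ ∃ j ∈ Icc 1 (v ℓ), d ℓ j ≠ 0) :=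
    fun ℓ => Finset.mem_filter
  have hTne : T.Nonempty :=
    ⟨i1, (hTmem i1).2 ⟨mem_Icc.2 ⟨hi1a, hi1b⟩, j1, mem_Icc.2 ⟨hj1a, hj1b⟩, hd1⟩⟩
  set istar := T.max' hTne with histar
  have histarT : istar ∈ T := T.max'_mem hTne
  have hle_istar : ∀ ℓ ∈ T, ℓ ≤ istar := fun ℓ hℓ => T.le_max' ℓ hℓ
  obtain ⟨hisIcc, jstar, hjstarm, hdstar⟩ := (hTmem istar).1 histarT
  rw [mem_Icc] at hisIcc hjstarm
  obtain ⟨his1, his2⟩ := hisIcc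
  have hzero : ∀ ℓ j, istar < ℓ → ℓ ≤ n + 1 → 1 ≤ j → j ≤ v ℓ → d ℓ j = 0 := by
    intro ℓ j hℓ1 hℓ2 hj1' hj2'
    rcases Nat.lt_or_ge ℓ (n+1) with h | h
    · by_contra hne0
      have hmem : ℓ ∈ T :=
        (hTmem ℓ).2 ⟨mem_Icc.2 ⟨by omega, by omega⟩, j, mem_Icc.2 ⟨hj1', hj2'⟩, hne0⟩
      have := hle_istar ℓ hmem; omega
    · have : ℓ = n + 1 := by omega
      subst this; exact hdtop j
  have hEistar : 1 ≤ E istar := by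
    have hmem := (hlayer istar his1 his2).1
    rw [mem_Icc] at hmem
    have hb0 : d (istar+1) (r0 istar) = 0 :=
      hzero (istar+1) (r0 istar) (by omega) (by omega) hmem.1 hmem.2
    have hEeq : E istar = ∑ j ∈ Icc 1 (v istar), Bb ((d istar j : ℤ)) := by
      rw [hEdef]
      simp only [hb0, Nat.cast_zero, sub_zero]
    rw [hEeq]
    have h1' : (1:ℤ) ≤ Bb ((d istar jstar : ℤ)) := by
      have hc : (1:ℤ) ≤ (d istar jstar : ℤ) := by
        exact_mod_cast Nat.one_le_iff_ne_zero.2 hdstar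
      linarith [le_Bb ((d istar jstar : ℤ))]
    exact h1'.trans (Finset.single_le_sum (fun j _ => Bb_nonneg _)
      (mem_Icc.2 ⟨hjstarm.1, hjstarm.2⟩))
  have hUtop : U (n+1) = 0 := by
    rw [hUdef]
    apply Finset.sum_eq_zero
    intro j _; simp [hdtop]
  have hUzero : ∀ ℓ, istar < ℓ → ℓ ≤ n + 1 → U ℓ = 0 := by
    intro ℓ h1' h2'
    apply Finset.sum_eq_zero
    intro j hj
    rw [mem_Icc] at hj
    simp [hzero ℓ j h1' h2' hj.1 hj.2]
  -- main estimate
  have main : ∀ i0, 1 ≤ i0 → i0 ≤ istar → degD n v d ≤ -U i0 - 1 := by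
    intro i0 h1' h2'
    have hi0n : i0 ≤ n := le_trans h2' his2
    have hdisj : Disjoint (Ico 1 i0) (Icc i0 n) := by
      rw [Finset.disjoint_left]
      intro x hx hx'
      rw [mem_Ico] at hx; rw [mem_Icc] at hx'; omega
    have hun : Ico 1 i0 ∪ Icc i0 n = Icc 1 n := by
      ext x
      simp only [mem_union, mem_Ico, mem_Icc]
      omega
    have hsplit : ∑ ℓ ∈ Icc 1 n, S ℓ = (∑ ℓ ∈ Ico 1 i0, S ℓ) + ∑ ℓ ∈ Icc i0 n, S ℓ := by
      rw [← hun, Finset.sum_union hdisj]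
    have hfirst : ∑ ℓ ∈ Ico 1 i0, S ℓ ≤ 0 := by
      apply Finset.sum_nonpos
      intro ℓ hℓ
      rw [mem_Ico] at hℓ
      have h := (hlayer ℓ hℓ.1 (by omega)).2.1
      have := hEnonneg ℓ
      rw [hEdef] at this
      linarith
    have htel : ∑ ℓ ∈ Icc i0 n, (U (ℓ+1) - U ℓ) = U (n+1) - U i0 := degD_tele U n i0 hi0n
    have hsecond : ∑ ℓ ∈ Icc i0 n, S ℓ ≤ (U (n+1) - U i0) - ∑ ℓ ∈ Icc i0 n, E ℓ := by
      calc ∑ ℓ ∈ Icc i0 n, S ℓ ≤ ∑ ℓ ∈ Icc i0 n, (U (ℓ+1) - U ℓ - E ℓ) := by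
            apply Finset.sum_le_sum
            intro ℓ hℓ
            rw [mem_Icc] at hℓ
            exact (hlayer ℓ (le_trans h1' hℓ.1) hℓ.2).2.2
        _ = (∑ ℓ ∈ Icc i0 n, (U (ℓ+1) - U ℓ)) - ∑ ℓ ∈ Icc i0 n, E ℓ := by
            rw [← Finset.sum_sub_distrib]
        _ = (U (n+1) - U i0) - ∑ ℓ ∈ Icc i0 n, E ℓ := by rw [htel]
    have hEsum : E istar ≤ ∑ ℓ ∈ Icc i0 n, E ℓ :=
      Finset.single_le_sum (fun ℓ _ => hEnonneg ℓ) (mem_Icc.2 ⟨h2', his2⟩)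
    rw [hdeg, hsplit]
    rw [hUtop] at hsecond
    linarith
  -- conclusion
  intro i hi1 hi2
  show degD n v d < -(U i)
  rcases le_or_gt i istar with h | h
  · have := main i hi1 h; linarith
  · have hU0 : U i = 0 := hUzero i h (by omega)
    have h1' := main istar his1 (le_refl _)
    have h2' := hUnonneg istar
    rw [hU0]; linarith
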